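/- Let A(λ, x) = x² ∂²Ĉ/∂x²(λ, x) = x λ^{−1/2} φ(d(λ, x)). There exists a constant C > 0 (depending only on K) such that for all λ > 0, x > 0 and z > −1: | ∫_λ^∞ ( A(v, x(1+z)) − A(v, x) ) dv | ≤ C x^{1/2} ϖ(z) ∫_λ^∞ (1 + v^{−1}) e^{−v/8} dv, where ϖ(z) = z·1_{{z>0}} + (1+z)^{−1/2}·1_{{−1<z≤0}} + 1 (all integrals being absolutely convergent). -/

import Mathlib

open MeasureTheory

/-- Standard normal density φ(a) = (2π)^{−1/2} e^{−a²/2}. -/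
noncomputable def stdNormalPdf (a : ℝ) : ℝ :=
  (Real.sqrt (2 * Real.pi))⁻¹ * Real.exp (-(a ^ 2) / 2)

/-- Standard normal distribution function Φ(a) = ∫_{−∞}^a φ(s) ds. -/
noncomputable def stdNormalCdf (a : ℝ) : ℝ :=
  ∫ s in Set.Iio a, stdNormalPdf s

/-- d(λ, x) = ln(x/K)/√λ + √λ/2. -/
noncomputable def bsD (K lam x : ℝ) : ℝ :=
  Real.log (x / K) / Real.sqrt lam + Real.sqrt lam / 2

/-- Black–Scholes call price with strike K, zero interest rate and total
remaining variance λ: Ĉ(λ, x) = x Φ(d(λ, x)) − K Φ(d(λ, x) − √λ). -/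
noncomputable def bsPrice (K lam x : ℝ) : ℝ :=
  x * stdNormalCdf (bsD K lam x) - K * stdNormalCdf (bsD K lam x - Real.sqrt lam)

/-- A(λ, x) = x² ∂²Ĉ/∂x²(λ, x) = x λ^{−1/2} φ(d(λ, x)). -/
noncomputable def bsA (K lam x : ℝ) : ℝ :=
  x * (Real.sqrt lam)⁻¹ * stdNormalPdf (bsD K lam x)

/-- ϖ(z) = z·1_{z>0} + (1+z)^{−1/2}·1_{−1<z≤0} + 1. -/
noncomputable def varpi (z : ℝ) : ℝ :=
  (if 0 < z then z else 0)
    + (if -1 < z ∧ z ≤ 0 then (1 + z) ^ (-(1 / 2) : ℝ) else 0) + 1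

lemma bsA_eq (K v x : ℝ) (hK : 0 < K) (hv : 0 < v) (hx : 0 < x) :
    bsA K v x = (Real.sqrt (2*Real.pi))⁻¹ * Real.sqrt K * x ^ ((1:ℝ)/2)
      * ((Real.sqrt v)⁻¹ * Real.exp (-(Real.log (x/K))^2/(2*v)) * Real.exp (-v/8)) := by
  have hs : (0:ℝ) < Real.sqrt v := Real.sqrt_pos.mpr hv
  have hs2 : Real.sqrt v ^ 2 = v := Real.sq_sqrt hv.le
  unfold bsA stdNormalPdf bsD
  set L := Real.log (x / K) with hL
  have hexp : -(L / Real.sqrt v + Real.sqrt v / 2) ^ 2 / 2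
      = -L^2/(2*v) + (-L/2 + -v/8) := by
    field_simp
    rw [hs2]; ring
  rw [hexp, Real.exp_add, Real.exp_add]
  have hxL : x * Real.exp (-L/2) = Real.sqrt K * x ^ ((1:ℝ)/2) := by
    have : Real.exp (-L/2) = K ^ ((1:ℝ)/2) * x ^ (-(1:ℝ)/2) := by
      rw [hL, Real.log_div hx.ne' hK.ne']
      rw [Real.rpow_def_of_pos hK, Real.rpow_def_of_pos hx, ← Real.exp_add]
      ring_nf
    rw [this, Real.sqrt_eq_rpow]
    have : x * x ^ (-(1:ℝ)/2) = x ^ ((1:ℝ)/2) := by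
      nth_rewrite 1 [← Real.rpow_one x]
      rw [← Real.rpow_add hx]; norm_num
    ring_nf
    rw [mul_right_comm, this, mul_comm]
  linear_combination ((Real.sqrt (2*Real.pi))⁻¹ * (Real.sqrt v)⁻¹ *
    Real.exp (-L^2/(2*v)) * Real.exp (-v/8)) * hxL

lemma bsA_nonneg (K v x : ℝ) (hv : 0 ≤ v) (hx : 0 ≤ x) : 0 ≤ bsA K v x := by
  unfold bsA stdNormalPdf
  positivity

lemma sqrt_inv_le (v : ℝ) (hv : 0 < v) : (Real.sqrt v)⁻¹ ≤ 1 + v⁻¹ := by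
  have hs : (0:ℝ) < Real.sqrt v := Real.sqrt_pos.mpr hv
  have hs2 : Real.sqrt v ^ 2 = v := Real.sq_sqrt hv.le
  rw [inv_le_iff_one_le_mul₀ hs]
  have h2 : 2 ≤ Real.sqrt v + (Real.sqrt v)⁻¹ := by
    have h3 : Real.sqrt v + (Real.sqrt v)⁻¹ - 2 = (Real.sqrt v - 1)^2 / Real.sqrt v := by
      field_simp; linarith [hs2]
    have h4 : 0 ≤ (Real.sqrt v - 1)^2 / Real.sqrt v := by positivity
    linarith
  have hvinv : v⁻¹ * Real.sqrt v = (Real.sqrt v)⁻¹ := by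
    rw [← hs2]; field_simp; rw [Real.sqrt_sq hs.le]
  calc (1:ℝ) ≤ Real.sqrt v + (Real.sqrt v)⁻¹ := by linarith
    _ = (1 + v⁻¹) * Real.sqrt v := by rw [add_mul, one_mul, hvinv]

lemma bsA_le (K v x : ℝ) (hK : 0 < K) (hv : 0 < v) (hx : 0 < x) :
    bsA K v x ≤ (Real.sqrt (2*Real.pi))⁻¹ * Real.sqrt K * x ^ ((1:ℝ)/2)
      * ((1 + v⁻¹) * Real.exp (-v / 8)) := by
  rw [bsA_eq K v x hK hv hx]
  have h1 : Real.exp (-(Real.log (x/K))^2/(2*v)) ≤ 1 := by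
    apply Real.exp_le_one_iff.mpr
    have h5 : (0:ℝ) ≤ (Real.log (x/K))^2/(2*v) := by positivity
    have h6 : -(Real.log (x/K))^2/(2*v) = -((Real.log (x/K))^2/(2*v)) := by ring
    linarith
  have hc : 0 ≤ (Real.sqrt (2*Real.pi))⁻¹ * Real.sqrt K * x ^ ((1:ℝ)/2) := by positivity
  refine mul_le_mul_of_nonneg_left ?_ hc
  calc (Real.sqrt v)⁻¹ * Real.exp (-(Real.log (x/K))^2/(2*v)) * Real.exp (-v/8)
      ≤ (Real.sqrt v)⁻¹ * 1 * Real.exp (-v/8) := by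
        gcongr
    _ ≤ (1 + v⁻¹) * Real.exp (-v/8) := by
        rw [mul_one]
        gcongr
        exact sqrt_inv_le v hv

lemma bsA_contOn (K y : ℝ) : ContinuousOn (fun v => bsA K v y) (Set.Ioi (0:ℝ)) := by
  have hs : ContinuousOn Real.sqrt (Set.Ioi (0:ℝ)) := Real.continuous_sqrt.continuousOn
  have hne : ∀ v ∈ Set.Ioi (0:ℝ), Real.sqrt v ≠ 0 := fun v hv =>
    (Real.sqrt_pos.mpr hv).ne'
  have hd : ContinuousOn (fun v => bsD K v y) (Set.Ioi (0:ℝ)) := by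
    unfold bsD
    exact (continuousOn_const.div hs hne).add (hs.div_const 2)
  unfold bsA stdNormalPdf
  exact (continuousOn_const.mul (hs.inv₀ hne)).mul
    (continuousOn_const.mul (Real.continuous_exp.comp_continuousOn
      (((hd.pow 2).neg).div_const 2)))

lemma h_integrable (lam : ℝ) (hlam : 0 < lam) :
    IntegrableOn (fun v => (1 + v⁻¹) * Real.exp (-v / 8)) (Set.Ioi lam) := by
  have hbase : IntegrableOn (fun v => Real.exp (-(1/8) * v)) (Set.Ioi lam) :=
    exp_neg_integrableOn_Ioi lam (by norm_num)
  have hg : IntegrableOn (fun v => (1 + lam⁻¹) * Real.exp (-(1/8) * v)) (Set.Ioi lam) :=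
    hbase.const_mul _
  have hmeas : AEStronglyMeasurable (fun v => (1 + v⁻¹) * Real.exp (-v / 8))
      (Measure.restrict volume (Set.Ioi lam)) := by
    apply ContinuousOn.aestronglyMeasurable _ measurableSet_Ioi
    apply ContinuousOn.mul
    · exact continuousOn_const.add (continuousOn_inv₀.mono (fun v hv =>
        (lt_trans hlam hv).ne'))
    · exact (Real.continuous_exp.comp (continuous_id.neg.div_const 8)).continuousOn
  apply hg.mono' hmeas
  filter_upwards [ae_restrict_mem measurableSet_Ioi] with v hv
  have hv0 : 0 < v := lt_trans hlam hv
  have h1 : v⁻¹ ≤ lam⁻¹ := inv_anti₀ hlam (le_of_lt hv)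
  have h2 : -v/8 = -(1/8)*v := by ring
  rw [Real.norm_eq_abs, abs_of_nonneg (by positivity), h2]
  gcongr

lemma one_le_varpi (z : ℝ) (hz : -1 < z) : 1 ≤ varpi z := by
  unfold varpi
  split_ifs with h1 h2 <;>
    [linarith; linarith; linarith [Real.rpow_nonneg (by linarith : (0:ℝ) ≤ 1 + z) (-(1/2):ℝ)];
     linarith]

lemma rpow_half_le_varpi (z : ℝ) (hz : -1 < z) : (1 + z) ^ ((1:ℝ)/2) ≤ varpi z := by
  rcases le_or_gt z 0 with h | h
  · have : (1 + z) ^ ((1:ℝ)/2) ≤ 1 :=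
      Real.rpow_le_one (by linarith) (by linarith) (by norm_num)
    unfold varpi
    rw [if_neg (by linarith), if_pos ⟨hz, h⟩]
    have := Real.rpow_nonneg (by linarith : (0:ℝ) ≤ 1 + z) (-(1/2):ℝ)
    linarith
  · have h1 : (1 + z) ^ ((1:ℝ)/2) ≤ (1 + z) ^ (1:ℝ) :=
      Real.rpow_le_rpow_of_exponent_le (by linarith) (by norm_num)
    rw [Real.rpow_one] at h1
    unfold varpi
    rw [if_pos h, if_neg (by intro hh; linarith [hh.2])]
    linarith

/- STATEMENT 18: There exists C > 0 (depending only on K) such that for all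
   λ > 0, x > 0 and z > −1:
   |∫_λ^∞ (A(v, x(1+z)) − A(v, x)) dv| ≤ C x^{1/2} ϖ(z) ∫_λ^∞ (1+v^{−1}) e^{−v/8} dv,
   all integrals being absolutely convergent. -/
theorem bs_A_integrated_jump_bound (K : ℝ) (hK : 0 < K) :
    ∃ C : ℝ, 0 < C ∧ ∀ lam x z : ℝ, 0 < lam → 0 < x → -1 < z →
      IntegrableOn (fun v => bsA K v (x * (1 + z)) - bsA K v x) (Set.Ioi lam) ∧
      IntegrableOn (fun v => (1 + v⁻¹) * Real.exp (-v / 8)) (Set.Ioi lam) ∧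
      |∫ v in Set.Ioi lam, (bsA K v (x * (1 + z)) - bsA K v x)|
        ≤ C * x ^ ((1 : ℝ) / 2) * varpi z
            * ∫ v in Set.Ioi lam, (1 + v⁻¹) * Real.exp (-v / 8) := by
  have hpi : (0:ℝ) < Real.sqrt (2 * Real.pi) :=
    Real.sqrt_pos.mpr (by positivity)
  set cK : ℝ := (Real.sqrt (2*Real.pi))⁻¹ * Real.sqrt K with hcK
  have hcK0 : 0 < cK := by
    have := Real.sqrt_pos.mpr hK
    positivity
  refine ⟨2 * cK, by positivity, fun lam x z hlam hx hz => ?_⟩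
  set y := x * (1 + z) with hy
  have hy0 : 0 < y := by
    have : 0 < 1 + z := by linarith
    positivity
  have hh := h_integrable lam hlam
  set B : ℝ := 2 * cK * x ^ ((1:ℝ)/2) * varpi z with hB
  have hvp1 : 1 ≤ varpi z := one_le_varpi z hz
  have hB0 : 0 ≤ B := by positivity
  -- key pointwise bound
  have key : ∀ v ∈ Set.Ioi lam, |bsA K v y - bsA K v x|
      ≤ B * ((1 + v⁻¹) * Real.exp (-v / 8)) := by
    intro v hv
    have hv0 : 0 < v := lt_trans hlam hv
    have ha := bsA_le K v y hK hv0 hy0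
    have hb := bsA_le K v x hK hv0 hx
    have hna := bsA_nonneg K v y hv0.le hy0.le
    have hnb := bsA_nonneg K v x hv0.le hx.le
    have hy2 : y ^ ((1:ℝ)/2) = x ^ ((1:ℝ)/2) * (1 + z) ^ ((1:ℝ)/2) :=
      Real.mul_rpow hx.le (by linarith)
    have h2v : (1 + z) ^ ((1:ℝ)/2) + 1 ≤ 2 * varpi z := by
      linarith [rpow_half_le_varpi z hz]
    have hhval : 0 ≤ (1 + v⁻¹) * Real.exp (-v / 8) := by positivity
    have habs : |bsA K v y - bsA K v x| ≤ bsA K v y + bsA K v x := by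
      rw [abs_sub_le_iff]; constructor <;> linarith
    calc |bsA K v y - bsA K v x| ≤ bsA K v y + bsA K v x := habs
      _ ≤ cK * y ^ ((1:ℝ)/2) * ((1 + v⁻¹) * Real.exp (-v / 8))
          + cK * x ^ ((1:ℝ)/2) * ((1 + v⁻¹) * Real.exp (-v / 8)) := add_le_add ha hb
      _ = (cK * x ^ ((1:ℝ)/2) * ((1 + z) ^ ((1:ℝ)/2) + 1))
            * ((1 + v⁻¹) * Real.exp (-v / 8)) := by rw [hy2]; ring
      _ ≤ (cK * x ^ ((1:ℝ)/2) * (2 * varpi z)) * ((1 + v⁻¹) * Real.exp (-v / 8)) := by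
          refine mul_le_mul_of_nonneg_right ?_ hhval
          exact mul_le_mul_of_nonneg_left h2v (by positivity)
      _ = B * ((1 + v⁻¹) * Real.exp (-v / 8)) := by rw [hB]; ring
  -- integrability of f
  have hfmeas : AEStronglyMeasurable (fun v => bsA K v y - bsA K v x)
      (Measure.restrict volume (Set.Ioi lam)) := by
    apply ContinuousOn.aestronglyMeasurable _ measurableSet_Ioi
    exact ((bsA_contOn K y).mono (Set.Ioi_subset_Ioi hlam.le)).sub
      ((bsA_contOn K x).mono (Set.Ioi_subset_Ioi hlam.le))
  have hBh : IntegrableOn (fun v => B * ((1 + v⁻¹) * Real.exp (-v / 8))) (Set.Ioi lam) :=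
    hh.const_mul B
  have hf : IntegrableOn (fun v => bsA K v y - bsA K v x) (Set.Ioi lam) := by
    apply hBh.mono' hfmeas
    filter_upwards [ae_restrict_mem measurableSet_Ioi] with v hv
    rw [Real.norm_eq_abs]
    exact key v hv
  refine ⟨hf, hh, ?_⟩
  calc |∫ v in Set.Ioi lam, (bsA K v y - bsA K v x)|
      ≤ ∫ v in Set.Ioi lam, |bsA K v y - bsA K v x| := by
        simpa [Real.norm_eq_abs] using
          norm_integral_le_integral_norm (μ := Measure.restrict volume (Set.Ioi lam))
            (fun v => bsA K v y - bsA K v x)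
    _ ≤ ∫ v in Set.Ioi lam, B * ((1 + v⁻¹) * Real.exp (-v / 8)) := by
        refine setIntegral_mono_on hf.abs hBh measurableSet_Ioi key
    _ = B * ∫ v in Set.Ioi lam, (1 + v⁻¹) * Real.exp (-v / 8) := by
        rw [MeasureTheory.integral_const_mul]
    _ = 2 * cK * x ^ ((1:ℝ)/2) * varpi z
        * ∫ v in Set.Ioi lam, (1 + v⁻¹) * Real.exp (-v / 8) := by rw [hB]
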